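/- Let E and F be complex inner product spaces, let k be a positive natural number, let φ₁,…,φ_k be an orthonormal family in E, let Φ : E → F be a linear map, and let η ≥ 0 satisfy |δ_{ij} − ⟨Φφ_i, Φφ_j⟩| ≤ η for all i,j ∈ {1,…,k}, where δ_{ij} is the Kronecker delta. Then for every u in the linear span of φ₁,…,φ_k one has |‖u‖² − ‖Φu‖²| ≤ k·η·‖u‖². -/

import Mathlib

open scoped InnerProductSpace

theorem gram_perturbation_estimate
    {E F : Type*} [NormedAddCommGroup E] [InnerProductSpace ℂ E]
    [NormedAddCommGroup F] [InnerProductSpace ℂ F]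
    (k : ℕ) (hk : 0 < k) (φ : Fin k → E) (hφ : Orthonormal ℂ φ)
    (Φ : E →ₗ[ℂ] F) (η : ℝ) (hη : 0 ≤ η)
    (hgram : ∀ i j : Fin k,
      ‖(if i = j then (1 : ℂ) else 0) - ⟪Φ (φ i), Φ (φ j)⟫_ℂ‖ ≤ η) :
    ∀ u ∈ Submodule.span ℂ (Set.range φ),
      |‖u‖ ^ 2 - ‖Φ u‖ ^ 2| ≤ k * η * ‖u‖ ^ 2 := by
  intro u hu
  obtain ⟨c, hc⟩ := (Submodule.mem_span_range_iff_exists_fun ℂ).mp hu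
  have hΦu : Φ u = ∑ i, c i • Φ (φ i) := by
    rw [← hc, map_sum]; simp
  have huu : ⟪u, u⟫_ℂ = ∑ i, (starRingEnd ℂ) (c i) * c i := by
    rw [← hc]; exact hφ.inner_sum c c Finset.univ
  have hΦΦ : ⟪Φ u, Φ u⟫_ℂ
      = ∑ i, ∑ j, (starRingEnd ℂ) (c i) * c j * ⟪Φ (φ i), Φ (φ j)⟫_ℂ := by
    rw [hΦu, sum_inner]
    refine Finset.sum_congr rfl fun i _ => ?_
    rw [inner_sum]
    refine Finset.sum_congr rfl fun j _ => ?_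
    rw [inner_smul_left, inner_smul_right]; ring
  have key : ⟪u, u⟫_ℂ - ⟪Φ u, Φ u⟫_ℂ
      = ∑ i, ∑ j, (starRingEnd ℂ) (c i) * c j
          * ((if i = j then (1 : ℂ) else 0) - ⟪Φ (φ i), Φ (φ j)⟫_ℂ) := by
    rw [huu, hΦΦ]
    rw [← Finset.sum_sub_distrib]
    refine Finset.sum_congr rfl fun i _ => ?_
    simp only [mul_sub, Finset.sum_sub_distrib]
    congr 1
    simp [mul_ite, mul_one, mul_zero]
  have habs : |‖u‖ ^ 2 - ‖Φ u‖ ^ 2| ≤ ‖⟪u, u⟫_ℂ - ⟪Φ u, Φ u⟫_ℂ‖ := by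
    rw [← inner_self_eq_norm_sq (𝕜 := ℂ) u,
      ← inner_self_eq_norm_sq (𝕜 := ℂ) (Φ u), ← map_sub]
    exact RCLike.abs_re_le_norm _
  have hnorm : ∑ i, ‖c i‖ ^ 2 = ‖u‖ ^ 2 := by
    rw [← inner_self_eq_norm_sq (𝕜 := ℂ) u, huu, map_sum]
    refine Finset.sum_congr rfl fun i _ => ?_
    rw [mul_comm, Complex.mul_conj]
    simp [Complex.sq_norm, RCLike.re_to_complex]
  rw [key] at habs
  refine habs.trans ?_
  calc ‖∑ i, ∑ j, (starRingEnd ℂ) (c i) * c j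
          * ((if i = j then (1 : ℂ) else 0) - ⟪Φ (φ i), Φ (φ j)⟫_ℂ)‖
      ≤ ∑ i, ∑ j, ‖c i‖ * ‖c j‖ * η := by
        refine (norm_sum_le _ _).trans (Finset.sum_le_sum fun i _ => ?_)
        refine (norm_sum_le _ _).trans (Finset.sum_le_sum fun j _ => ?_)
        rw [norm_mul, norm_mul, Complex.norm_conj]
        exact mul_le_mul_of_nonneg_left (hgram i j) (by positivity)
    _ = (∑ i, ‖c i‖) ^ 2 * η := by
        rw [sq, Finset.sum_mul_sum, Finset.sum_mul]
        exact Finset.sum_congr rfl fun i _ => (Finset.sum_mul _ _ _).symm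
    _ ≤ (k * ∑ i, ‖c i‖ ^ 2) * η := by
        refine mul_le_mul_of_nonneg_right ?_ hη
        simpa using sq_sum_le_card_mul_sum_sq (s := Finset.univ)
          (f := fun i => ‖c i‖)
    _ = k * η * ‖u‖ ^ 2 := by rw [hnorm]; ring
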